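/- Fix a proper edge-colouring of K_n and 0 < p <= 1. Call a pair of disjoint vertex sets A, B with |A| = |B| = y epsilon-nearly-rainbow if the number of distinct colours appearing on edges between A and B is at least (1 - epsilon/2)*y^2. Let G be the random subgraph obtained by including each colour class independently with probability p. If epsilon^2 * y >= 30 * log n / p, then with probability at least 1 - o(1), every epsilon-nearly-rainbow pair A, B with |A| = |B| = y satisfies e_G(A, B) >= (1 - epsilon)*p*y^2. -/

import Mathlib

def IsProperEdgeColoring {V C : Type*} (G : SimpleGraph V) (c : Sym2 V → C) : Prop :=
  ∀ e ∈ G.edgeSet, ∀ f ∈ G.edgeSet, e ≠ f → (∃ v, v ∈ e ∧ v ∈ f) → c e ≠ c f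

open scoped Classical in
/-- The probability of the event `E` when each colour in `C` is included in a random
set of colours independently with probability `p`. -/
noncomputable def colorProb {C : Type*} [Fintype C] (p : ℝ) (E : Finset C → Prop) : ℝ :=
  ∑ S : Finset C, if E S then p ^ S.card * (1 - p) ^ (Fintype.card C - S.card) else 0

/-- The number of edges of the random subgraph determined by the colour set `S`
between two (disjoint) vertex sets `A` and `B`. -/
def eG {n : ℕ} {C : Type*} [DecidableEq C] (c : Sym2 (Fin n) → C) (S : Finset C)
    (A B : Finset (Fin n)) : ℕ :=
  ((A ×ˢ B).filter fun ab => ab.1 ≠ ab.2 ∧ c s(ab.1, ab.2) ∈ S).card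

/-- The degree of `v` in the random subgraph determined by the colour set `S`. -/
def degS {n : ℕ} {C : Type*} [DecidableEq C] (c : Sym2 (Fin n) → C) (S : Finset C)
    (v : Fin n) : ℕ :=
  (Finset.univ.filter fun u => u ≠ v ∧ c s(v, u) ∈ S).card

/-- The number of distinct colours on edges between `A` and `B`. -/
def colorsBetween {n : ℕ} {C : Type*} [DecidableEq C] (c : Sym2 (Fin n) → C)
    (A B : Finset (Fin n)) : ℕ :=
  (((A ×ˢ B).filter fun ab => ab.1 ≠ ab.2).image fun ab => c s(ab.1, ab.2)).card

open Finset

namespace Stmt5Aux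
variable {C : Type*} [Fintype C] [DecidableEq C] {p : ℝ}

noncomputable def w (p : ℝ) (C : Type*) [Fintype C] (S : Finset C) : ℝ :=
  p ^ S.card * (1 - p) ^ (Fintype.card C - S.card)

omit [DecidableEq C] in
lemma w_nonneg (hp0 : 0 ≤ p) (hp1 : p ≤ 1) (S : Finset C) : 0 ≤ w p C S :=
  mul_nonneg (pow_nonneg hp0 _) (pow_nonneg (by linarith) _)

open scoped Classical in
omit [DecidableEq C] in
lemma colorProb_eq (E : Finset C → Prop) :
    colorProb p E = ∑ S : Finset C, if E S then w p C S else 0 := rfl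

lemma sum_w_prod (u : C → ℝ) :
    ∑ S : Finset C, w p C S * ∏ i ∈ S, u i = ∏ i : C, (p * u i + (1 - p)) := by
  rw [Finset.prod_add, ← Finset.powerset_univ, Finset.sum_congr rfl]
  intro S hS
  have h : (univ \ S).card = Fintype.card C - S.card := by
    rw [card_sdiff, inter_univ, card_univ]
  rw [Finset.prod_mul_distrib]
  simp [w, h, mul_comm, mul_assoc, mul_left_comm]

lemma sum_w : ∑ S : Finset C, w p C S = 1 := by
  have := sum_w_prod (p := p) (C := C) (fun _ => 1)
  simpa using this

omit [DecidableEq C] in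
lemma colorProb_mono (hp0 : 0 ≤ p) (hp1 : p ≤ 1) {E F : Finset C → Prop}
    (h : ∀ S, E S → F S) : colorProb p E ≤ colorProb p F := by
  classical
  rw [colorProb_eq, colorProb_eq]
  refine Finset.sum_le_sum fun S _ => ?_
  by_cases hE : E S
  · rw [if_pos hE, if_pos (h S hE)]
  · rw [if_neg hE]
    split
    · exact w_nonneg hp0 hp1 S
    · exact le_refl _

omit [DecidableEq C] in
lemma colorProb_congr {E F : Finset C → Prop} (h : ∀ S, E S ↔ F S) :
    colorProb p E = colorProb p F := by
  classical
  rw [colorProb_eq, colorProb_eq]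
  refine Finset.sum_congr rfl fun S _ => ?_
  by_cases hE : E S
  · rw [if_pos hE, if_pos ((h S).1 hE)]
  · rw [if_neg hE, if_neg (fun hF => hE ((h S).2 hF))]

lemma colorProb_true : colorProb p (fun _ : Finset C => True) = 1 := by
  classical
  rw [colorProb_eq]
  simpa using sum_w (p := p) (C := C)

lemma colorProb_le_one (hp0 : 0 ≤ p) (hp1 : p ≤ 1) (E : Finset C → Prop) :
    colorProb p E ≤ 1 := by
  calc colorProb p E ≤ colorProb p (fun _ : Finset C => True) :=
        colorProb_mono hp0 hp1 (fun _ _ => trivial)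
  _ = 1 := colorProb_true

lemma colorProb_compl (E : Finset C → Prop) :
    colorProb p E = 1 - colorProb p (fun S => ¬ E S) := by
  classical
  rw [colorProb_eq, colorProb_eq, eq_sub_iff_add_eq, ← Finset.sum_add_distrib]
  rw [← sum_w (p := p) (C := C)]
  refine Finset.sum_congr rfl fun S _ => ?_
  by_cases hE : E S
  · rw [if_pos hE, if_neg (not_not_intro hE), add_zero]
  · rw [if_neg hE, if_pos hE, zero_add]

omit [DecidableEq C] in
lemma colorProb_union_bound {ι : Type*} (hp0 : 0 ≤ p) (hp1 : p ≤ 1)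
    (I : Finset ι) (Q : ι → Finset C → Prop) :
    colorProb p (fun S => ∃ i ∈ I, Q i S) ≤ ∑ i ∈ I, colorProb p (Q i) := by
  classical
  simp only [colorProb_eq]
  rw [Finset.sum_comm]
  refine Finset.sum_le_sum fun S _ => ?_
  by_cases hE : ∃ i ∈ I, Q i S
  · rw [if_pos hE]
    obtain ⟨i₀, hi₀, hQ⟩ := hE
    have h0 : w p C S = if Q i₀ S then w p C S else 0 := by rw [if_pos hQ]
    refine h0.le.trans ?_
    exact Finset.single_le_sum (f := fun i => if Q i S then w p C S else 0)
      (fun i _ => by split; exacts [w_nonneg hp0 hp1 S, le_refl _]) hi₀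
  · rw [if_neg hE]
    exact Finset.sum_nonneg fun i _ => by split; exacts [w_nonneg hp0 hp1 S, le_refl _]

lemma exp_neg_le (s : ℝ) (hs : 0 ≤ s) : Real.exp (-s) ≤ 1 - s + 3/4 * s^2 := by
  have h1 : 1 + s/2 ≤ Real.exp (s/2) := by linarith [Real.add_one_le_exp (s/2)]
  have h2 : (1 + s/2)^2 ≤ Real.exp s := by
    have h := mul_le_mul h1 h1 (by linarith) (le_of_lt (Real.exp_pos _))
    calc (1 + s/2)^2 = (1+s/2)*(1+s/2) := by ring
    _ ≤ Real.exp (s/2) * Real.exp (s/2) := h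
    _ = Real.exp s := by rw [← Real.exp_add]; ring_nf
  have h3 : Real.exp (-s) * Real.exp s = 1 := by rw [← Real.exp_add]; simp
  have h4 : 0 < Real.exp (-s) := Real.exp_pos _
  nlinarith [sq_nonneg s, sq_nonneg (s*s), mul_nonneg (mul_nonneg hs hs) hs]

lemma chernoff (hp0 : 0 < p) (hp1 : p ≤ 1) (T : Finset C) (a s : ℝ) (hs : 0 ≤ s) :
    colorProb p (fun S => ((S ∩ T).card : ℝ) < a)
      ≤ Real.exp (s * a - p * T.card * (s - 3/4 * s^2)) := by
  classical
  set u : C → ℝ := fun i => if i ∈ T then Real.exp (-s) else 1 with hu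
  have step1 : colorProb p (fun S => ((S ∩ T).card : ℝ) < a)
      ≤ Real.exp (s * a) * ∑ S : Finset C, w p C S * ∏ i ∈ S, u i := by
    rw [colorProb_eq, Finset.mul_sum]
    refine Finset.sum_le_sum fun S _ => ?_
    have hprod : ∏ i ∈ S, u i = Real.exp (-(s * (S ∩ T).card)) := by
      rw [hu]
      rw [Finset.prod_ite_mem, Finset.prod_const, ← Real.exp_nat_mul]
      ring_nf
    rw [hprod]
    by_cases hE : ((S ∩ T).card : ℝ) < a
    · rw [if_pos hE]
      have hw := w_nonneg hp0.le hp1 S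
      have hone : (1:ℝ) ≤ Real.exp (s * a) * Real.exp (-(s * ((S ∩ T).card : ℝ))) := by
        rw [← Real.exp_add]
        have hnn : 0 ≤ s * a + -(s * ((S ∩ T).card : ℝ)) := by nlinarith
        calc (1:ℝ) = Real.exp 0 := by simp
        _ ≤ _ := Real.exp_le_exp.2 hnn
      calc w p C S = w p C S * 1 := (mul_one _).symm
      _ ≤ w p C S * (Real.exp (s*a) * Real.exp (-(s * ((S ∩ T).card : ℝ)))) :=
          mul_le_mul_of_nonneg_left hone hw
      _ = Real.exp (s*a) * (w p C S * Real.exp (-(s * ((S ∩ T).card : ℝ)))) := by ring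
    · rw [if_neg hE]
      exact mul_nonneg (Real.exp_pos _).le
        (mul_nonneg (w_nonneg hp0.le hp1 S) (Real.exp_pos _).le)
  have step2 : ∑ S : Finset C, w p C S * ∏ i ∈ S, u i
      = (p * Real.exp (-s) + (1 - p)) ^ T.card := by
    rw [sum_w_prod]
    have h : ∀ i : C, p * u i + (1 - p)
        = if i ∈ T then (p * Real.exp (-s) + (1-p)) else 1 := by
      intro i; rw [hu]; dsimp only; split <;> ring
    rw [Finset.prod_congr rfl (fun i _ => h i), Finset.prod_ite_mem, Finset.univ_inter,
      Finset.prod_const]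
  have step3 : (p * Real.exp (-s) + (1 - p)) ^ T.card
      ≤ Real.exp (-(p * T.card * (1 - Real.exp (-s)))) := by
    have hbase : p * Real.exp (-s) + (1 - p) ≤ Real.exp (-(p * (1 - Real.exp (-s)))) := by
      have h := Real.add_one_le_exp (-(p * (1 - Real.exp (-s))))
      linarith
    have hbn : 0 ≤ p * Real.exp (-s) + (1 - p) :=
      add_nonneg (mul_nonneg hp0.le (Real.exp_pos _).le) (by linarith)
    calc (p * Real.exp (-s) + (1 - p)) ^ T.card
        ≤ Real.exp (-(p * (1 - Real.exp (-s)))) ^ T.card := pow_le_pow_left₀ hbn hbase _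
    _ = Real.exp (-(p * (T.card : ℝ) * (1 - Real.exp (-s)))) := by
        rw [← Real.exp_nat_mul]; ring_nf
  have step4 : Real.exp (s * a) * Real.exp (-(p * T.card * (1 - Real.exp (-s))))
      ≤ Real.exp (s * a - p * T.card * (s - 3/4 * s^2)) := by
    rw [← Real.exp_add]
    apply Real.exp_le_exp.2
    have he : s - 3/4 * s^2 ≤ 1 - Real.exp (-s) := by
      have := exp_neg_le s hs
      linarith
    have hpk : (0:ℝ) ≤ p * T.card := mul_nonneg hp0.le (Nat.cast_nonneg _)
    nlinarith [mul_le_mul_of_nonneg_left he hpk]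
  calc colorProb p (fun S => ((S ∩ T).card : ℝ) < a)
      ≤ Real.exp (s * a) * ∑ S : Finset C, w p C S * ∏ i ∈ S, u i := step1
  _ = Real.exp (s * a) * (p * Real.exp (-s) + (1 - p)) ^ T.card := by rw [step2]
  _ ≤ Real.exp (s * a) * Real.exp (-(p * T.card * (1 - Real.exp (-s)))) :=
      mul_le_mul_of_nonneg_left step3 (Real.exp_pos _).le
  _ ≤ _ := step4

lemma count_le_eG {n : ℕ} (c : Sym2 (Fin n) → C) (S : Finset C) (A B : Finset (Fin n)) :
    (S ∩ (((A ×ˢ B).filter fun ab => ab.1 ≠ ab.2).image fun ab => c s(ab.1, ab.2))).card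
      ≤ eG c S A B := by
  unfold eG
  refine le_trans (Finset.card_le_card (t := ((A ×ˢ B).filter
      fun ab => ab.1 ≠ ab.2 ∧ c s(ab.1, ab.2) ∈ S).image fun ab => c s(ab.1, ab.2)) ?_)
    Finset.card_image_le
  intro t ht
  simp only [Finset.mem_inter, Finset.mem_image, Finset.mem_filter, Finset.mem_product] at ht ⊢
  obtain ⟨hS, ab, ⟨⟨hA, hB⟩, hne⟩, hct⟩ := ht
  exact ⟨ab, ⟨⟨hA, hB⟩, hne, hct ▸ hS⟩, hct⟩

lemma pair_bound {n : ℕ} (c : Sym2 (Fin n) → C) (hp0 : 0 < p) (hp1 : p ≤ 1)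
    {ε : ℝ} (hε0 : 0 < ε) (hε1 : ε < 1) (y : ℕ)
    (h30 : 30 * Real.log n ≤ p * ε^2 * y)
    (A B : Finset (Fin n)) (hrain : (1 - ε/2) * (y:ℝ)^2 ≤ (colorsBetween c A B : ℝ)) :
    colorProb p (fun S => (eG c S A B : ℝ) < (1-ε)*p*(y:ℝ)^2)
      ≤ Real.exp (-(5/2) * y * Real.log n) := by
  set T : Finset C := ((A ×ˢ B).filter fun ab => ab.1 ≠ ab.2).image fun ab => c s(ab.1, ab.2)
    with hT
  have hkT : colorsBetween c A B = T.card := rfl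
  set a : ℝ := (1-ε)*p*(y:ℝ)^2 with ha
  have hmono : colorProb p (fun S => (eG c S A B : ℝ) < a)
      ≤ colorProb p (fun S => ((S ∩ T).card : ℝ) < a) := by
    refine colorProb_mono hp0.le hp1 fun S hlt => lt_of_le_of_lt ?_ hlt
    exact_mod_cast count_le_eG c S A B
  have hcher := chernoff hp0 hp1 T a (ε/3) (by linarith)
  refine hmono.trans (hcher.trans (Real.exp_le_exp.2 ?_))
  -- arithmetic
  have hk : (1 - ε/2) * (y:ℝ)^2 ≤ (T.card : ℝ) := by rw [← hkT]; exact hrain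
  have hq : (0:ℝ) ≤ ε/3 - 3/4*(ε/3)^2 := by nlinarith
  have h1 : p * ((1-ε/2)*(y:ℝ)^2) * (ε/3 - 3/4*(ε/3)^2)
      ≤ p * (T.card : ℝ) * (ε/3 - 3/4*(ε/3)^2) :=
    mul_le_mul_of_nonneg_right (mul_le_mul_of_nonneg_left hk hp0.le) hq
  have hy0 : (0:ℝ) ≤ (y:ℝ) := Nat.cast_nonneg _
  have h2 : (ε/3)*a - p*((1-ε/2)*(y:ℝ)^2)*(ε/3 - 3/4*(ε/3)^2) ≤ -(p*ε^2*(y:ℝ)^2)/12 := by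
    rw [ha]
    nlinarith [mul_nonneg (mul_nonneg hp0.le (sq_nonneg (y:ℝ)))
      (mul_nonneg (mul_nonneg hε0.le hε0.le) hε0.le)]
  have h3 : 30 * Real.log n * (y:ℝ) ≤ p * ε^2 * (y:ℝ) * (y:ℝ) :=
    mul_le_mul_of_nonneg_right h30 hy0
  nlinarith [h1, h2, h3]

end Stmt5Aux

open Filter in
/-- If `ε² y ≥ 30 log n / p`, then with probability `1 - o(1)` every
`ε`-nearly-rainbow pair `A, B` with `|A| = |B| = y` spans at least `(1-ε)py²`
edges of the random subgraph `G` obtained by keeping each colour class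
independently with probability `p`. -/
theorem stmt5 (p ε : ℕ → ℝ) (y : ℕ → ℕ)
    (hp : ∀ n, 0 < p n ∧ p n ≤ 1) (hε : ∀ n, 0 < ε n)
    (C : ℕ → Type) [∀ n, Fintype (C n)] [∀ n, DecidableEq (C n)]
    (c : ∀ n, Sym2 (Fin n) → C n)
    (hc : ∀ n, IsProperEdgeColoring (⊤ : SimpleGraph (Fin n)) (c n))
    (hεy : ∀ n : ℕ, 30 * Real.log n / p n ≤ (ε n) ^ 2 * (y n : ℝ)) :
    Tendsto (fun n : ℕ => colorProb (p n) (fun S =>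
      ∀ A B : Finset (Fin n), Disjoint A B → A.card = y n → B.card = y n →
        (1 - ε n / 2) * (y n : ℝ) ^ 2 ≤ (colorsBetween (c n) A B : ℝ) →
        (1 - ε n) * p n * (y n : ℝ) ^ 2 ≤ (eG (c n) S A B : ℝ)))
      atTop (nhds 1) := by

  have hrp : Tendsto (fun n : ℕ => 1 - (n:ℝ) ^ (-(1/2) : ℝ)) atTop (nhds 1) := by
    have h0 : Tendsto (fun n : ℕ => (n:ℝ) ^ (-(1/2) : ℝ)) atTop (nhds 0) :=
      (tendsto_rpow_neg_atTop (by norm_num)).comp tendsto_natCast_atTop_atTop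
    have := tendsto_const_nhds (x := (1:ℝ)) (f := atTop (α := ℕ)) |>.sub h0
    simpa using this
  refine tendsto_of_tendsto_of_tendsto_of_le_of_le' hrp tendsto_const_nhds ?_
    (Eventually.of_forall fun n => Stmt5Aux.colorProb_le_one (hp n).1.le (hp n).2 _)
  filter_upwards [eventually_ge_atTop 2] with n hn2
  set E : Finset (C n) → Prop := fun S =>
      ∀ A B : Finset (Fin n), Disjoint A B → A.card = y n → B.card = y n →
        (1 - ε n / 2) * (y n : ℝ) ^ 2 ≤ (colorsBetween (c n) A B : ℝ) →
        (1 - ε n) * p n * (y n : ℝ) ^ 2 ≤ (eG (c n) S A B : ℝ) with hE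
  have hp0 := (hp n).1
  have hp1 := (hp n).2
  have hrpnn : (0:ℝ) ≤ (n:ℝ) ^ (-(1/2) : ℝ) := Real.rpow_nonneg (Nat.cast_nonneg n) _
  by_cases hε1 : 1 ≤ ε n
  · have heq : colorProb (p n) E = 1 := by
      rw [Stmt5Aux.colorProb_congr (F := fun _ => True) (fun S => ?_),
        Stmt5Aux.colorProb_true]
      simp only [iff_true]
      intro A B _ _ _ _
      have h1 : (0:ℝ) ≤ (eG (c n) S A B : ℝ) := Nat.cast_nonneg _
      nlinarith [mul_nonneg hp0.le (sq_nonneg ((y n : ℝ))), hε1, h1]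
    rw [heq]; linarith
  · push_neg at hε1
    have hL : 0 < Real.log n := Real.log_pos (by exact_mod_cast hn2)
    have h30 : 30 * Real.log n ≤ p n * (ε n)^2 * (y n : ℝ) := by
      have := hεy n
      rw [div_le_iff₀ hp0] at this
      nlinarith
    have hy1 : 1 ≤ y n := by
      by_contra h
      push_neg at h
      interval_cases hy : y n
      · simp [hy] at h30; nlinarith
    have hy1' : (1:ℝ) ≤ (y n : ℝ) := by exact_mod_cast hy1
    set I : Finset (Finset (Fin n) × Finset (Fin n)) :=
      ((Finset.powersetCard (y n) Finset.univ) ×ˢ (Finset.powersetCard (y n) Finset.univ)).filter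
        (fun AB => Disjoint AB.1 AB.2 ∧
          (1 - ε n / 2) * (y n : ℝ) ^ 2 ≤ (colorsBetween (c n) AB.1 AB.2 : ℝ)) with hI
    have hcompl : colorProb (p n) E = 1 - colorProb (p n) (fun S => ¬ E S) :=
      Stmt5Aux.colorProb_compl E
    have hcong : colorProb (p n) (fun S => ¬ E S) = colorProb (p n)
        (fun S => ∃ AB ∈ I, (eG (c n) S AB.1 AB.2 : ℝ) < (1 - ε n) * p n * (y n : ℝ)^2) := by
      refine Stmt5Aux.colorProb_congr fun S => ?_
      simp only [hE]
      push_neg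
      constructor
      · rintro ⟨A, B, hd, hA, hB, hr, hlt⟩
        refine ⟨(A, B), ?_, hlt⟩
        rw [hI, Finset.mem_filter, Finset.mem_product,
          Finset.mem_powersetCard_univ, Finset.mem_powersetCard_univ]
        exact ⟨⟨hA, hB⟩, hd, hr⟩
      · rintro ⟨AB, hmem, hlt⟩
        rw [hI, Finset.mem_filter, Finset.mem_product,
          Finset.mem_powersetCard_univ, Finset.mem_powersetCard_univ] at hmem
        exact ⟨AB.1, AB.2, hmem.2.1, hmem.1.1, hmem.1.2, hmem.2.2, hlt⟩
    have hub : colorProb (p n)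
        (fun S => ∃ AB ∈ I, (eG (c n) S AB.1 AB.2 : ℝ) < (1 - ε n) * p n * (y n : ℝ)^2)
        ≤ ∑ AB ∈ I, colorProb (p n)
          (fun S => (eG (c n) S AB.1 AB.2 : ℝ) < (1 - ε n) * p n * (y n : ℝ)^2) :=
      Stmt5Aux.colorProb_union_bound hp0.le hp1 I _
    have hterm : ∀ AB ∈ I, colorProb (p n)
        (fun S => (eG (c n) S AB.1 AB.2 : ℝ) < (1 - ε n) * p n * (y n : ℝ)^2)
        ≤ Real.exp (-(5/2) * (y n : ℝ) * Real.log n) := by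
      intro AB hmem
      rw [hI, Finset.mem_filter] at hmem
      exact Stmt5Aux.pair_bound (c n) hp0 hp1 (hε n) hε1 (y n) h30 AB.1 AB.2 hmem.2.2
    have hcard : (I.card : ℝ) ≤ ((n:ℝ) ^ (y n)) * ((n:ℝ) ^ (y n)) := by
      have h1 : I.card ≤ (n.choose (y n)) * (n.choose (y n)) := by
        calc I.card ≤ ((Finset.powersetCard (y n) (Finset.univ : Finset (Fin n))) ×ˢ
            (Finset.powersetCard (y n) Finset.univ)).card := Finset.card_filter_le _ _
        _ = (n.choose (y n)) * (n.choose (y n)) := by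
            rw [Finset.card_product, Finset.card_powersetCard, Finset.card_univ, Fintype.card_fin]
      have h2 : (n.choose (y n)) * (n.choose (y n)) ≤ n ^ (y n) * n ^ (y n) :=
        Nat.mul_le_mul (Nat.choose_le_pow n (y n)) (Nat.choose_le_pow n (y n))
      calc (I.card : ℝ) ≤ ((n ^ (y n) * n ^ (y n) : ℕ) : ℝ) := by exact_mod_cast h1.trans h2
      _ = ((n:ℝ) ^ (y n)) * ((n:ℝ) ^ (y n)) := by push_cast; ring
    have hn0 : (0:ℝ) < (n:ℝ) := by
      have : (0:ℕ) < n := lt_of_lt_of_le (by norm_num) hn2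
      exact_mod_cast this
    have hnpow : (n:ℝ) ^ (y n) = Real.exp ((y n : ℝ) * Real.log n) := by
      calc (n:ℝ) ^ (y n) = Real.exp (Real.log n) ^ (y n) := by rw [Real.exp_log hn0]
      _ = Real.exp ((y n : ℝ) * Real.log n) := (Real.exp_nat_mul _ _).symm
    have hfinal : colorProb (p n)
        (fun S => ∃ AB ∈ I, (eG (c n) S AB.1 AB.2 : ℝ) < (1 - ε n) * p n * (y n : ℝ)^2)
        ≤ (n:ℝ) ^ (-(1/2) : ℝ) := by
      refine hub.trans ?_
      calc ∑ AB ∈ I, colorProb (p n)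
            (fun S => (eG (c n) S AB.1 AB.2 : ℝ) < (1 - ε n) * p n * (y n : ℝ)^2)
          ≤ ∑ _AB ∈ I, Real.exp (-(5/2) * (y n : ℝ) * Real.log n) := Finset.sum_le_sum hterm
      _ = (I.card : ℝ) * Real.exp (-(5/2) * (y n : ℝ) * Real.log n) := by
          rw [Finset.sum_const, nsmul_eq_mul]
      _ ≤ ((n:ℝ) ^ (y n) * (n:ℝ) ^ (y n)) * Real.exp (-(5/2) * (y n : ℝ) * Real.log n) :=
          mul_le_mul_of_nonneg_right hcard (Real.exp_pos _).le
      _ = Real.exp ((y n : ℝ) * Real.log n + (y n : ℝ) * Real.log n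
            + (-(5/2) * (y n : ℝ) * Real.log n)) := by
          rw [hnpow, ← Real.exp_add, ← Real.exp_add]
      _ ≤ Real.exp (Real.log n * (-(1/2))) := Real.exp_le_exp.2 (by nlinarith [hL.le, hy1'])
      _ = (n:ℝ) ^ (-(1/2) : ℝ) := (Real.rpow_def_of_pos hn0 _).symm
    rw [hcompl, hcong]
    linarith
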